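/- There is a CNN architecture with depth L = 2, at most J = 16 channels, filter size K = 2, and all parameters bounded in magnitude by 3N, such that for every positive integer N and every integer m ∈ {0,1,…,N}, this architecture yields a CNN ψ̃_{m,N} ∈ F^CNN(2, 16, 2, 3N, 3N) satisfying ψ̃_{m,N}(x) = ψ(3N(x − m/N)) exactly for all x, and ‖ψ̃_{m,N}‖_{W^{k,∞}((0,1))} ≤ (3N)^k for k = 0, 1. Furthermore, the weight matrix in the fully connected layer of ψ̃_{m,N} has nonzero entries only in its first row. -/

import Mathlib

open MeasureTheory ENNReal

namespace CRN

noncomputable section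

/-- ReLU activation. -/
def relu (x : ℝ) : ℝ := max x 0

/-- One-sided stride-one convolution of a filter `W` with `Z ∈ ℝ^{D×Cin}`. -/
def conv1d {D K Cin Cout : ℕ} (W : Fin Cout → Fin K → Fin Cin → ℝ)
    (Z : Fin D → Fin Cin → ℝ) : Fin D → Fin Cout → ℝ :=
  fun i j => ∑ k : Fin K, ∑ l : Fin Cin,
    if h : (i : ℕ) + (k : ℕ) < D then W j k l * Z ⟨(i : ℕ) + (k : ℕ), h⟩ l else 0

/-- A convolutional layer: a filter together with a bias matrix. -/
structure ConvLayer (D K Cin Cout : ℕ) where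
  W : Fin Cout → Fin K → Fin Cin → ℝ
  B : Fin D → Fin Cout → ℝ

def ConvLayer.eval {D K Cin Cout : ℕ} (layer : ConvLayer D K Cin Cout)
    (Z : Fin D → Fin Cin → ℝ) : Fin D → Fin Cout → ℝ :=
  fun i j => relu (conv1d layer.W Z i j + layer.B i j)

def ConvLayer.bounded {D K Cin Cout : ℕ} (layer : ConvLayer D K Cin Cout) (κ : ℝ) : Prop :=
  (∀ j k l, |layer.W j k l| ≤ κ) ∧ (∀ i j, |layer.B i j| ≤ κ)

/-- A chain of convolutional layers (each followed by ReLU). -/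
inductive ConvChain (D K : ℕ) : ℕ → ℕ → Type
  | single {Cin Cout : ℕ} (layer : ConvLayer D K Cin Cout) : ConvChain D K Cin Cout
  | cons {Cin Cmid Cout : ℕ} (layer : ConvLayer D K Cin Cmid)
      (rest : ConvChain D K Cmid Cout) : ConvChain D K Cin Cout

def ConvChain.eval {D K : ℕ} : {Cin Cout : ℕ} → ConvChain D K Cin Cout →
    (Fin D → Fin Cin → ℝ) → (Fin D → Fin Cout → ℝ)
  | _, _, .single layer => layer.eval
  | _, _, .cons layer rest => fun Z => rest.eval (layer.eval Z)

/-- number of convolutional layers (filters) in a chain -/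
def ConvChain.depth {D K : ℕ} : {Cin Cout : ℕ} → ConvChain D K Cin Cout → ℕ
  | _, _, .single _ => 1
  | _, _, .cons _ rest => rest.depth + 1

/-- all channel sizes in the chain are bounded by `J` -/
def ConvChain.channelsLe {D K : ℕ} : {Cin Cout : ℕ} → ConvChain D K Cin Cout → ℕ → Prop
  | Cin, Cout, .single _, J => Cin ≤ J ∧ Cout ≤ J
  | Cin, _, @ConvChain.cons _ _ _ Cmid _ _ rest, J => Cin ≤ J ∧ Cmid ≤ J ∧ rest.channelsLe J

/-- all filter and bias entries are bounded in magnitude by `κ` -/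
def ConvChain.bounded {D K : ℕ} : {Cin Cout : ℕ} → ConvChain D K Cin Cout → ℝ → Prop
  | _, _, .single layer, κ => layer.bounded κ
  | _, _, .cons layer rest, κ => layer.bounded κ ∧ rest.bounded κ

/-- the padding operator `P(x) = [x, 0, …, 0] ∈ ℝ^{D×C}` -/
def pad {D : ℕ} (C : ℕ) (x : Fin D → ℝ) : Fin D → Fin C → ℝ :=
  fun i j => if (j : ℕ) = 0 then x i else 0

/-- composition of `M` residual blocks, each `Z ↦ Conv(Z) + Z` -/
def resEval {D K C M : ℕ} (blocks : Fin M → ConvChain D K C C)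
    (Z : Fin D → Fin C → ℝ) : Fin D → Fin C → ℝ :=
  (List.finRange M).foldl (fun Z m => fun i j => (blocks m).eval Z i j + Z i j) Z

/-- The class `𝒞(M, L, J, K, κ₁, κ₂)` of ConvResNets: padding, `M` residual blocks with at most
`L` filters per block, at most `J` channels, filter size `K`, filter/bias entries bounded by `κ₁`;
and a final fully connected layer `f(x) = W ⊗ Q(x) + b` with `‖W‖_∞ ∨ |b| ≤ κ₂`. -/
def ConvResNetClass (D M L J K : ℕ) (κ₁ κ₂ : ℝ) : Set ((Fin D → ℝ) → ℝ) :=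
  { f | ∃ (C : ℕ) (blocks : Fin M → ConvChain D K C C)
        (Wout : Fin D → Fin C → ℝ) (b : ℝ),
      0 < C ∧ C ≤ J ∧
      (∀ m, (blocks m).depth ≤ L) ∧
      (∀ m, (blocks m).channelsLe J) ∧
      (∀ m, (blocks m).bounded κ₁) ∧
      (∀ i j, |Wout i j| ≤ κ₂) ∧ |b| ≤ κ₂ ∧
      (∀ x, f x = (∑ i, ∑ j, Wout i j * resEval blocks (pad C x) i j) + b) }

/-- A CNN: padding, a chain of convolutional layers, then a fully connected output layer. -/
structure CNN (D K : ℕ) where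
  Cin : ℕ
  Cout : ℕ
  chain : ConvChain D K Cin Cout
  Wout : Fin D → Fin Cout → ℝ
  bias : ℝ

def CNN.eval {D K : ℕ} (net : CNN D K) (x : Fin D → ℝ) : ℝ :=
  (∑ i, ∑ j, net.Wout i j * net.chain.eval (pad net.Cin x) i j) + net.bias

/-- membership of a CNN in the architecture class `ℱ^CNN(L, J, K, κ₁, κ₂)` -/
def CNN.inClass {D K : ℕ} (net : CNN D K) (L J : ℕ) (κ₁ κ₂ : ℝ) : Prop :=
  0 < net.Cin ∧ net.Cin ≤ J ∧ net.Cout ≤ J ∧ net.chain.depth ≤ L ∧ net.chain.channelsLe J ∧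
  net.chain.bounded κ₁ ∧ (∀ i j, |net.Wout i j| ≤ κ₂) ∧ |net.bias| ≤ κ₂

/-- the weight matrix of the fully connected layer has nonzero entries only in its first row -/
def CNN.firstRowOnly {D K : ℕ} (net : CNN D K) : Prop :=
  ∀ i j, net.Wout i j ≠ 0 → (i : ℕ) = 0

/-! ### Sobolev spaces -/

/-- first-order partial derivative in direction `i` -/
def pderiv {D : ℕ} (i : Fin D) (φ : (Fin D → ℝ) → ℝ) : (Fin D → ℝ) → ℝ :=
  fun x => fderiv ℝ φ x (Pi.single i 1)

/-- iterated partial derivatives along a list of directions -/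
def iterPDeriv {D : ℕ} : List (Fin D) → ((Fin D → ℝ) → ℝ) → ((Fin D → ℝ) → ℝ)
  | [], φ => φ
  | i :: l, φ => pderiv i (iterPDeriv l φ)

/-- `g` is the weak derivative of `f` on `Ω` of multi-order given by the list `l`:
integration by parts against all smooth compactly supported test functions in `Ω`. -/
def HasWeakDerivOn {D : ℕ} (Ω : Set (Fin D → ℝ)) (f g : (Fin D → ℝ) → ℝ)
    (l : List (Fin D)) : Prop :=
  ∀ φ : (Fin D → ℝ) → ℝ, ContDiff ℝ (⊤ : ℕ∞) φ → HasCompactSupport φ → tsupport φ ⊆ Ω →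
    ∫ x in Ω, f x * iterPDeriv l φ x = (-1 : ℝ) ^ l.length * ∫ x in Ω, g x * φ x

/-- the finite set of multi-indices `a : Fin D → ℕ` with `|a| ≤ α` -/
def multiIdx (D α : ℕ) : Finset (Fin D → ℕ) :=
  (Fintype.piFinset fun _ : Fin D => Finset.range (α + 1)).filter fun a => ∑ i, a i ≤ α

/-- a list of directions representing the multi-index `a` -/
def idxList {D : ℕ} (a : Fin D → ℕ) : List (Fin D) :=
  (List.finRange D).flatMap fun i => List.replicate (a i) i

/-- the Sobolev `W^{α,p}(Ω)`-norm of a family `g` of (weak) derivatives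
(`g a` is the derivative of multi-order `a`; `g 0` is the function itself) -/
def sobNormOf {D : ℕ} (Ω : Set (Fin D → ℝ)) (α : ℕ) (p : ℝ≥0∞)
    (g : (Fin D → ℕ) → (Fin D → ℝ) → ℝ) : ℝ≥0∞ :=
  if p = ∞ then (multiIdx D α).sup fun a => eLpNorm (g a) ∞ (volume.restrict Ω)
  else (∑ a ∈ multiIdx D α, eLpNorm (g a) p (volume.restrict Ω) ^ p.toReal) ^ (1 / p.toReal)

/-- `f ∈ W^{α,p}(Ω)` with `‖f‖_{W^{α,p}(Ω)} ≤ R` -/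
def SobolevLe {D : ℕ} (Ω : Set (Fin D → ℝ)) (α : ℕ) (p : ℝ≥0∞)
    (f : (Fin D → ℝ) → ℝ) (R : ℝ≥0∞) : Prop :=
  ∃ g : (Fin D → ℕ) → (Fin D → ℝ) → ℝ,
    (∀ x, g 0 x = f x) ∧
    (∀ a ∈ multiIdx D α, HasWeakDerivOn Ω f (g a) (idxList a)) ∧
    sobNormOf Ω α p g ≤ R

/-- the Euclidean distance on `Fin D → ℝ` -/
def eudist {D : ℕ} (x y : Fin D → ℝ) : ℝ := Real.sqrt (∑ i, (x i - y i) ^ 2)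

/-- the Sobolev–Slobodeckij `W^{s,p}(Ω)`-norm, `0 < s < 1` -/
def slobNorm {D : ℕ} (Ω : Set (Fin D → ℝ)) (s : ℝ) (p : ℝ≥0∞)
    (f : (Fin D → ℝ) → ℝ) : ℝ≥0∞ :=
  if p = ∞ then
    max (eLpNorm f ∞ (volume.restrict Ω))
      (essSup (fun z : (Fin D → ℝ) × (Fin D → ℝ) =>
          ENNReal.ofReal (|f z.1 - f z.2| / eudist z.1 z.2 ^ s))
        ((volume.restrict Ω).prod (volume.restrict Ω)))
  else
    (eLpNorm f p (volume.restrict Ω) ^ p.toReal +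
      ∫⁻ x in Ω, ∫⁻ y in Ω,
        ENNReal.ofReal ((|f x - f y| / eudist x y ^ (s + (D : ℝ) / p.toReal)) ^ p.toReal)) ^
      (1 / p.toReal)

/-- `‖f‖_{W^{s,p}(Ω)} ≤ R` for `s ∈ [0,1]`: integer Sobolev norm at the endpoints,
Sobolev–Slobodeckij norm for `0 < s < 1`. -/
def FracSobolevLe {D : ℕ} (Ω : Set (Fin D → ℝ)) (s : ℝ) (p : ℝ≥0∞)
    (f : (Fin D → ℝ) → ℝ) (R : ℝ≥0∞) : Prop :=
  (s = 0 → SobolevLe Ω 0 p f R) ∧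
  (s = 1 → SobolevLe Ω 1 p f R) ∧
  (s ≠ 0 → s ≠ 1 → slobNorm Ω s p f ≤ R)

/-- the open unit hypercube `(0,1)^D` -/
def cube (D : ℕ) : Set (Fin D → ℝ) := {x | ∀ i, x i ∈ Set.Ioo (0 : ℝ) 1}

end

end CRN

namespace CRN

/-- the trapezoid function `ψ`: `ψ(x) = 1` for `|x| < 1`, `2 - |x|` for `1 ≤ |x| ≤ 2`,
`0` for `|x| > 2`. -/
noncomputable def trap (x : ℝ) : ℝ :=
  if |x| ≤ 1 then 1 else if |x| ≤ 2 then 2 - |x| else 0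

end CRN

open CRN MeasureTheory ENNReal


namespace CRN
noncomputable section

/-! ### auxiliary facts about `relu` and `trap` -/

lemma relu_sub_relu_neg (t : ℝ) : relu t - relu (-t) = t := by
  unfold relu; rcases le_total t 0 with h | h
  · rw [max_eq_right h, max_eq_left (by linarith)]; ring
  · rw [max_eq_left h, max_eq_right (by linarith)]; ring

/-- one-sided (right) derivative of the trapezoid function -/
noncomputable def trapD (y : ℝ) : ℝ :=
  if y < -2 then 0 else if y < -1 then 1 else if y < 1 then 0 else if y < 2 then -1 else 0

lemma trap_eq_relu (y : ℝ) :
    trap y = relu (y + 2) - relu (y + 1) - relu (y - 1) + relu (y - 2) := by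
  unfold trap relu
  rcases abs_cases y with ⟨he, h0⟩ | ⟨he, h0⟩ <;> rw [he] <;> split_ifs with h1 h2 <;>
    [skip; skip; skip; skip; skip; skip] <;>
  · rw [show max (y+2) 0 = if y + 2 ≤ 0 then 0 else y + 2 by split_ifs with h <;> [exact max_eq_right h; exact max_eq_left (by linarith)],
       show max (y+1) 0 = if y + 1 ≤ 0 then 0 else y + 1 by split_ifs with h <;> [exact max_eq_right h; exact max_eq_left (by linarith)],
       show max (y-1) 0 = if y - 1 ≤ 0 then 0 else y - 1 by split_ifs with h <;> [exact max_eq_right h; exact max_eq_left (by linarith)],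
       show max (y-2) 0 = if y - 2 ≤ 0 then 0 else y - 2 by split_ifs with h <;> [exact max_eq_right h; exact max_eq_left (by linarith)]]
    split_ifs <;> linarith

lemma trap_abs_le (y : ℝ) : |trap y| ≤ 1 := by
  rw [abs_le]; unfold trap; split_ifs with h1 h2
  · norm_num
  · push_neg at h1; constructor <;> linarith
  · norm_num

lemma trapD_abs_le (y : ℝ) : |trapD y| ≤ 1 := by
  rw [abs_le]; unfold trapD; split_ifs <;> norm_num

lemma trap_continuous : Continuous trap := by
  have : trap = fun y => relu (y + 2) - relu (y + 1) - relu (y - 1) + relu (y - 2) :=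
    funext trap_eq_relu
  rw [this]
  have hr : Continuous relu := continuous_id.max continuous_const
  fun_prop

lemma trapD_measurable : Measurable trapD := by
  unfold trapD
  exact Measurable.ite (measurableSet_lt measurable_id measurable_const)
    measurable_const <| Measurable.ite (measurableSet_lt measurable_id measurable_const)
    measurable_const <| Measurable.ite (measurableSet_lt measurable_id measurable_const)
    measurable_const <| Measurable.ite (measurableSet_lt measurable_id measurable_const)
    measurable_const measurable_const

lemma trap_hasDerivWithinAt (y : ℝ) :
    HasDerivWithinAt trap (trapD y) (Set.Ioi y) y := by
  have e1 : ∀ t : ℝ, -1 ≤ t → t ≤ 1 → trap t = 1 := by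
    intro t h1 h2; unfold trap; rw [if_pos (abs_le.mpr ⟨h1, h2⟩)]
  have e2 : ∀ t : ℝ, -2 ≤ t → t ≤ -1 → trap t = t + 2 := by
    intro t h1 h2; unfold trap
    rw [abs_of_nonpos (by linarith)]; split_ifs with h h' <;> linarith
  have e3 : ∀ t : ℝ, 1 ≤ t → t ≤ 2 → trap t = 2 - t := by
    intro t h1 h2; unfold trap
    rw [abs_of_nonneg (by linarith)]; split_ifs with h h' <;> linarith
  have e0 : ∀ t : ℝ, 2 ≤ |t| → trap t = 0 := by
    intro t h; unfold trap; split_ifs with h1 h2 <;> [linarith; linarith; rfl]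
  unfold trapD
  rcases lt_or_ge y (-2) with h | h
  · rw [if_pos h]
    refine (hasDerivWithinAt_const y _ (0:ℝ)).congr_of_eventuallyEq ?_ (by
      exact e0 y (by rw [abs_of_nonpos (by linarith)]; linarith))
    filter_upwards [self_mem_nhdsWithin,
      eventually_nhdsWithin_of_eventually_nhds (eventually_lt_nhds h)] with t ht ht2
    exact e0 t (by rw [abs_of_nonpos (by linarith)]; linarith)
  rcases lt_or_ge y (-1) with h' | h'
  · rw [if_neg (not_lt.mpr h), if_pos h']
    have : HasDerivWithinAt (fun t : ℝ => t + 2) 1 (Set.Ioi y) y :=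
      ((hasDerivAt_id y).add_const 2).hasDerivWithinAt
    refine this.congr_of_eventuallyEq ?_ (e2 y h h'.le)
    filter_upwards [self_mem_nhdsWithin,
      eventually_nhdsWithin_of_eventually_nhds (eventually_lt_nhds h')] with t ht ht2
    exact e2 t (by exact le_trans h (le_of_lt ht)) (le_of_lt ht2)
  rcases lt_or_ge y 1 with h'' | h''
  · rw [if_neg (not_lt.mpr h), if_neg (not_lt.mpr h'), if_pos h'']
    refine (hasDerivWithinAt_const y _ (1:ℝ)).congr_of_eventuallyEq ?_ (e1 y h' h''.le)
    filter_upwards [self_mem_nhdsWithin,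
      eventually_nhdsWithin_of_eventually_nhds (eventually_lt_nhds h'')] with t ht ht2
    exact e1 t (le_trans h' ht.le) ht2.le
  rcases lt_or_ge y 2 with h3 | h3
  · rw [if_neg (not_lt.mpr h), if_neg (not_lt.mpr h'), if_neg (not_lt.mpr h''), if_pos h3]
    have : HasDerivWithinAt (fun t : ℝ => 2 - t) (-1) (Set.Ioi y) y := by
      exact ((hasDerivAt_id' y).const_sub 2).hasDerivWithinAt
    refine this.congr_of_eventuallyEq ?_ (e3 y h'' h3.le)
    filter_upwards [self_mem_nhdsWithin,
      eventually_nhdsWithin_of_eventually_nhds (eventually_lt_nhds h3)] with t ht ht2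
    exact e3 t (le_trans h'' ht.le) ht2.le
  · rw [if_neg (not_lt.mpr h), if_neg (not_lt.mpr h'), if_neg (not_lt.mpr h''),
      if_neg (not_lt.mpr h3)]
    refine (hasDerivWithinAt_const y _ (0:ℝ)).congr_of_eventuallyEq ?_
      (e0 y (by rw [abs_of_nonneg (by linarith)]; exact h3))
    filter_upwards [self_mem_nhdsWithin] with t ht
    exact e0 t (by rw [abs_of_nonneg (by linarith [Set.mem_Ioi.mp ht])]; linarith [Set.mem_Ioi.mp ht])

/-! ### 1-D integration by parts for `trap (c·t + d)` -/

open intervalIntegral in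
lemma key_ibp (c d : ℝ) (hc : 0 < c) (φ : ℝ → ℝ) (hφ : ContDiff ℝ (⊤ : ℕ∞) φ)
    (h0 : φ 0 = 0) (h1 : φ 1 = 0) :
    ∫ t in Set.Ioo (0:ℝ) 1, trap (c * t + d) * deriv φ t
      = - ∫ t in Set.Ioo (0:ℝ) 1, (c * trapD (c * t + d)) * φ t := by
  set f : ℝ → ℝ := fun t => trap (c * t + d) with hf
  set g : ℝ → ℝ := fun t => c * trapD (c * t + d) with hg
  have hφd : Differentiable ℝ φ := hφ.differentiable (by simp)
  have hφc : Continuous φ := hφd.continuous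
  have hφ'c : Continuous (deriv φ) := hφ.continuous_deriv (by exact_mod_cast le_top)
  have hfc : Continuous f := trap_continuous.comp (by fun_prop)
  have hder : ∀ x ∈ Set.Ioo (0:ℝ) 1,
      HasDerivWithinAt (fun t => f t * φ t) (g x * φ x + f x * deriv φ x) (Set.Ioi x) x := by
    intro x _
    have hin : HasDerivWithinAt (fun t : ℝ => c * t + d) c (Set.Ioi x) x := by
      simpa using (((hasDerivAt_id x).const_mul c).add_const d).hasDerivWithinAt
    have hmaps : Set.MapsTo (fun t : ℝ => c * t + d) (Set.Ioi x) (Set.Ioi (c * x + d)) := by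
      intro t ht; simp only [Set.mem_Ioi] at *; nlinarith
    have hcomp : HasDerivWithinAt f (trapD (c * x + d) * c) (Set.Ioi x) x := by
      have := HasDerivWithinAt.comp x (trap_hasDerivWithinAt (c * x + d)) hin hmaps; exact this
    have hcomp' : HasDerivWithinAt f (g x) (Set.Ioi x) x := by
      convert hcomp using 1; simp only [hg]; ring
    exact hcomp'.mul (hφd x).hasDerivAt.hasDerivWithinAt
  have hmg : Measurable g := by
    apply Measurable.const_mul
    exact trapD_measurable.comp (by fun_prop)
  obtain ⟨C, hC⟩ : ∃ C, ∀ t ∈ Set.Icc (0:ℝ) 1, ‖φ t‖ ≤ C :=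
    isCompact_Icc.exists_bound_of_continuousOn hφc.continuousOn
  have hi1 : MeasureTheory.IntegrableOn (fun t => g t * φ t) (Set.Icc (0:ℝ) 1) := by
    apply MeasureTheory.Measure.integrableOn_of_bounded (M := c * C)
      (by simp) ((hmg.mul hφc.measurable).aestronglyMeasurable)
    filter_upwards [MeasureTheory.ae_restrict_mem measurableSet_Icc] with t ht
    have h1' : |g t| ≤ c := by
      rw [hg, abs_mul, abs_of_pos hc]
      calc c * |trapD (c * t + d)| ≤ c * 1 :=
            mul_le_mul_of_nonneg_left (trapD_abs_le _) hc.le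
        _ = c := mul_one c
    have h2 := hC t ht
    have h0C : 0 ≤ C := le_trans (norm_nonneg _) (hC 0 (by norm_num))
    calc ‖g t * φ t‖ = |g t| * ‖φ t‖ := by rw [norm_mul]; rfl
      _ ≤ c * C := mul_le_mul h1' h2 (norm_nonneg _) hc.le
  have hi2 : MeasureTheory.IntegrableOn (fun t => f t * deriv φ t) (Set.Icc (0:ℝ) 1) :=
    (hfc.mul hφ'c).continuousOn.integrableOn_compact isCompact_Icc
  have hint : IntervalIntegrable (fun t => g t * φ t + f t * deriv φ t) volume 0 1 :=
    (intervalIntegrable_iff_integrableOn_Icc_of_le zero_le_one).mpr (hi1.add hi2)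
  have hcont : ContinuousOn (fun t => f t * φ t) (Set.Icc 0 1) :=
    (hfc.mul hφc).continuousOn
  have hftc := integral_eq_sub_of_hasDeriv_right_of_le zero_le_one hcont hder hint
  rw [h0, h1, mul_zero, mul_zero, sub_zero] at hftc
  have hio : ∫ t in Set.Ioo (0:ℝ) 1, (g t * φ t + f t * deriv φ t) = 0 := by
    rw [← MeasureTheory.integral_Ioc_eq_integral_Ioo]
    rw [intervalIntegral.integral_of_le zero_le_one] at hftc
    exact hftc
  rw [MeasureTheory.integral_add (hi1.mono_set Set.Ioo_subset_Icc_self)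
    (hi2.mono_set Set.Ioo_subset_Icc_self)] at hio
  linarith [hio]

/-! ### the network -/

def layer1 (N m : ℕ) : ConvLayer 1 2 1 2 where
  W := fun j _ _ => if j = 0 then ((3*N : ℝ)) else -(3*N : ℝ)
  B := fun _ j => if j = 0 then -(3*m : ℝ) else (3*m : ℝ)

def layer2 : ConvLayer 1 2 2 4 where
  W := fun _ k l => if k = 0 then (if l = 0 then 1 else -1) else 0
  B := fun _ j => if j = 0 then 2 else if j = 1 then 1 else if j = 2 then -1 else -2

def theNet (N m : ℕ) : CNN 1 2 where
  Cin := 1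
  Cout := 4
  chain := ConvChain.cons (layer1 N m) (ConvChain.single layer2)
  Wout := fun _ j => if j = 0 then 1 else if j = 1 then -1 else if j = 2 then -1 else 1
  bias := 0

lemma conv1d_two {Cin Cout : ℕ} (W : Fin Cout → Fin 2 → Fin Cin → ℝ)
    (Z : Fin 1 → Fin Cin → ℝ) (j : Fin Cout) :
    conv1d W Z 0 j = ∑ l : Fin Cin, W j 0 l * Z 0 l := by
  unfold conv1d
  rw [Fin.sum_univ_two]
  have h0 : ((0 : Fin 1) : ℕ) + ((0 : Fin 2) : ℕ) < 1 := by decide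
  have h1 : ¬ (((0 : Fin 1) : ℕ) + ((1 : Fin 2) : ℕ) < 1) := by decide
  simp only [h0, h1, dif_pos, dif_neg, not_false_iff, Finset.sum_const_zero, add_zero]
  congr 1

lemma layer1_eval (N m : ℕ) (x : ℝ) (j : Fin 2) :
    (layer1 N m).eval (pad 1 fun _ => x) 0 j =
      if j = 0 then relu ((3*N:ℝ)*x - 3*m) else relu (-((3*N:ℝ)*x - 3*m)) := by
  unfold ConvLayer.eval
  rw [conv1d_two]
  simp only [layer1, pad, Fin.sum_univ_one]
  fin_cases j <;> norm_num <;> ring_nf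

lemma layer2_eval (N m : ℕ) (x : ℝ) (j : Fin 4) :
    layer2.eval ((layer1 N m).eval (pad 1 fun _ => x)) 0 j =
      relu (((3*N:ℝ)*x - 3*m) +
        (if j = 0 then 2 else if j = 1 then 1 else if j = 2 then -1 else -2)) := by
  rw [show layer2.eval ((layer1 N m).eval (pad 1 fun _ => x)) 0 j
      = relu (conv1d layer2.W ((layer1 N m).eval (pad 1 fun _ => x)) 0 j + layer2.B 0 j)
      from rfl]
  rw [conv1d_two, Fin.sum_univ_two, layer1_eval, layer1_eval]
  show relu ((1:ℝ) * _ + (-1) * _ + layer2.B 0 j) = _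
  have key : (1:ℝ) * relu ((3*N:ℝ)*x - 3*m) + (-1) * relu (-((3*N:ℝ)*x - 3*m))
      = (3*N:ℝ)*x - 3*m := by
    have := relu_sub_relu_neg ((3*N:ℝ)*x - 3*m); linarith
  rw [if_pos rfl, if_neg (show (1:Fin 2) ≠ 0 from by decide)]
  rw [key]
  rfl

lemma theNet_eval (N m : ℕ) (x : ℝ) :
    (theNet N m).eval (fun _ => x) =
      relu ((3*N*x - 3*m) + 2) - relu ((3*N*x - 3*m) + 1)
        - relu ((3*N*x - 3*m) - 1) + relu ((3*N*x - 3*m) - 2) := by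
  show (∑ i : Fin 1, ∑ j : Fin 4,
      (if j = 0 then (1:ℝ) else if j = 1 then -1 else if j = 2 then -1 else 1) *
        layer2.eval ((layer1 N m).eval (pad 1 fun _ => x)) i j) + 0 = _
  rw [Fin.sum_univ_one, Fin.sum_univ_four]
  rw [layer2_eval, layer2_eval, layer2_eval, layer2_eval]
  norm_num [show (1:Fin 4) ≠ 0 from by decide, show (2:Fin 4) ≠ 0 from by decide,
    show (2:Fin 4) ≠ 1 from by decide, show (3:Fin 4) ≠ 0 from by decide,
    show (3:Fin 4) ≠ 1 from by decide, show (3:Fin 4) ≠ 2 from by decide]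
  ring_nf

lemma theNet_eval_trap (N m : ℕ) (x : ℝ) :
    (theNet N m).eval (fun _ => x) = trap ((3*N:ℝ)*x - 3*m) := by
  rw [theNet_eval, trap_eq_relu]

lemma theNet_eval_trap' (N m : ℕ) (x : Fin 1 → ℝ) :
    (theNet N m).eval x = trap ((3*N:ℝ)*(x 0) - 3*m) := by
  have hx : x = fun _ => x 0 := funext fun i => by rw [Subsingleton.elim i 0]
  conv_lhs => rw [hx]
  exact theNet_eval_trap N m (x 0)

/-! ### multi-index helpers -/

lemma mem_multiIdx_zero {a : Fin 1 → ℕ} (ha : a ∈ multiIdx 1 0) : a 0 = 0 := by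
  simp only [multiIdx, Finset.mem_filter, Fin.sum_univ_one] at ha
  omega

lemma mem_multiIdx_one {a : Fin 1 → ℕ} (ha : a ∈ multiIdx 1 1) : a 0 = 0 ∨ a 0 = 1 := by
  simp only [multiIdx, Finset.mem_filter, Fin.sum_univ_one] at ha
  omega

lemma idxList_of_zero {a : Fin 1 → ℕ} (h : a 0 = 0) : idxList a = [] := by
  have h' : ∀ i : Fin 1, a i = 0 := fun i => by rw [Subsingleton.elim i 0]; exact h
  simp [idxList, h']

lemma idxList_of_one {a : Fin 1 → ℕ} (h : a 0 = 1) : idxList a = [(0 : Fin 1)] := by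
  have h' : ∀ i : Fin 1, a i = 1 := fun i => by rw [Subsingleton.elim i 0]; exact h
  simp [idxList, h', List.finRange]

lemma hasWeakDerivOn_nil {D : ℕ} (Ω : Set (Fin D → ℝ)) (f : (Fin D → ℝ) → ℝ) :
    HasWeakDerivOn Ω f f [] := by
  intro φ _ _ _
  simp [iterPDeriv]

/-! ### the weak derivative of the network on the cube -/

lemma theNet_weak (N m : ℕ) (hN : 0 < N) :
    HasWeakDerivOn (cube 1) (theNet N m).eval
      (fun x => (3*N:ℝ) * trapD ((3*N:ℝ) * x 0 - 3*m)) [(0 : Fin 1)] := by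
  intro φ hφ hφcs hφsupp
  have hcpos : (0:ℝ) < 3*N := by positivity
  set L : ℝ →L[ℝ] (Fin 1 → ℝ) :=
    ContinuousLinearMap.pi (fun _ : Fin 1 => ContinuousLinearMap.id ℝ ℝ) with hL
  have hLt : ∀ t : ℝ, L t = fun _ : Fin 1 => t := fun t => rfl
  set φ₁ : ℝ → ℝ := fun t => φ (L t) with hφ₁
  have hφ₁smooth : ContDiff ℝ (⊤ : ℕ∞) φ₁ := hφ.comp L.contDiff
  have hsingle : (Pi.single (0 : Fin 1) (1:ℝ)) = fun _ : Fin 1 => (1:ℝ) :=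
    funext fun i => by rw [Subsingleton.elim i 0]; simp
  have hD : ∀ t : ℝ, HasDerivAt φ₁ (fderiv ℝ φ (L t) (fun _ => 1)) t := by
    intro t
    have h1 : HasDerivAt (fun s : ℝ => L s) (L 1) t := L.hasDerivAt
    have h2 := (hφ.differentiable (by simp) (L t)).hasFDerivAt
    have h3 := h2.comp_hasDerivAt t h1
    exact h3
  have hDeriv : ∀ t : ℝ, deriv φ₁ t = pderiv 0 φ (fun _ => t) := by
    intro t
    rw [(hD t).deriv]
    unfold pderiv
    rw [hsingle, hLt]
  set e := (MeasurableEquiv.funUnique (Fin 1) ℝ).symm with hee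
  have he : ∀ t : ℝ, e t = fun _ : Fin 1 => t := by
    intro t; funext i
    rw [Subsingleton.elim i default]
    rfl
  have hpre : (⇑e) ⁻¹' (cube 1) = Set.Ioo (0:ℝ) 1 := by
    ext t
    rw [Set.mem_preimage, he t]
    constructor
    · intro h; exact h 0
    · intro h i; exact h
  have hmp : MeasureTheory.MeasurePreserving (⇑e) :=
    (MeasureTheory.volume_preserving_funUnique (Fin 1) ℝ).symm _
  have hemb : MeasurableEmbedding (⇑e) := e.measurableEmbedding
  have hnotin0 : (fun _ : Fin 1 => (0:ℝ)) ∉ tsupport φ := by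
    intro h
    exact absurd (hφsupp h 0).1 (lt_irrefl 0)
  have hnotin1 : (fun _ : Fin 1 => (1:ℝ)) ∉ tsupport φ := by
    intro h
    exact absurd (hφsupp h 0).2 (lt_irrefl 1)
  have hφ₁0 : φ₁ 0 = 0 := by
    rw [hφ₁]; exact image_eq_zero_of_notMem_tsupport (by rw [hLt]; exact hnotin0)
  have hφ₁1 : φ₁ 1 = 0 := by
    rw [hφ₁]; exact image_eq_zero_of_notMem_tsupport (by rw [hLt]; exact hnotin1)
  have hkey := key_ibp (3*N) (-(3*m)) hcpos φ₁ hφ₁smooth hφ₁0 hφ₁1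
  have hLHS : ∫ x in cube 1, (theNet N m).eval x * iterPDeriv [(0 : Fin 1)] φ x
      = ∫ t in Set.Ioo (0:ℝ) 1, trap ((3*N:ℝ) * t + -(3*m)) * deriv φ₁ t := by
    rw [← hmp.setIntegral_preimage_emb hemb
      (fun x => (theNet N m).eval x * iterPDeriv [(0 : Fin 1)] φ x) (cube 1), hpre]
    refine MeasureTheory.integral_congr_ae (Filter.Eventually.of_forall fun t => ?_)
    have h1 : iterPDeriv [(0 : Fin 1)] φ = pderiv 0 φ := rfl
    dsimp only
    rw [he t, theNet_eval_trap, h1, ← hDeriv t]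
    ring_nf
  have hRHS : ∫ x in cube 1, ((3*N:ℝ) * trapD ((3*N:ℝ) * x 0 - 3*m)) * φ x
      = ∫ t in Set.Ioo (0:ℝ) 1, ((3*N:ℝ) * trapD ((3*N:ℝ) * t + -(3*m))) * φ₁ t := by
    rw [← hmp.setIntegral_preimage_emb hemb
      (fun x => ((3*N:ℝ) * trapD ((3*N:ℝ) * x 0 - 3*m)) * φ x) (cube 1), hpre]
    refine MeasureTheory.integral_congr_ae (Filter.Eventually.of_forall fun t => ?_)
    dsimp only
    rw [he t]
    simp only [hφ₁, hLt]
    ring_nf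
  rw [hLHS, hRHS]
  simpa using hkey

end
end CRN

/-- **Lemma (exact CNN realization of a scaled trapezoid function).**
For every positive integer `N` and every `m ∈ {0,1,…,N}` there is a CNN
`ψ̃_{m,N} ∈ ℱ^CNN(2, 16, 2, 3N, 3N)` with `ψ̃_{m,N}(x) = ψ(3N(x - m/N))` for all `x`,
`‖ψ̃_{m,N}‖_{W^{k,∞}((0,1))} ≤ (3N)^k` for `k = 0, 1`, and whose fully connected weight
matrix has nonzero entries only in its first row. -/
theorem cnn_realizes_scaled_trapezoid (N : ℕ) (hN : 0 < N) (m : ℕ) (hm : m ≤ N) :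
    ∃ net : CNN 1 2,
      net.inClass 2 16 (3 * N) (3 * N) ∧
      net.firstRowOnly ∧
      (∀ x : ℝ, net.eval (fun _ => x) = trap (3 * N * (x - m / N))) ∧
      SobolevLe (cube 1) 0 ∞ net.eval 1 ∧
      SobolevLe (cube 1) 1 ∞ net.eval (ENNReal.ofReal (3 * N)) := by
  have hN1 : (1:ℝ) ≤ (N:ℝ) := by exact_mod_cast hN
  have hmN : (m:ℝ) ≤ (N:ℝ) := by exact_mod_cast hm
  have h3N : (3:ℝ) ≤ 3*N := by linarith
  have h3N0 : (0:ℝ) ≤ 3*N := by linarith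
  have h3m0 : (0:ℝ) ≤ 3*m := by positivity
  refine ⟨theNet N m, ?_, ?_, ?_, ?_, ?_⟩
  · -- membership in the class
    have hb1 : (layer1 N m).bounded (3*(N:ℝ)) := by
      constructor
      · intro j k l
        show |if j = 0 then ((3*N : ℝ)) else -(3*N : ℝ)| ≤ 3*N
        split_ifs
        · rw [abs_of_nonneg h3N0]
        · rw [abs_neg, abs_of_nonneg h3N0]
      · intro i j
        show |if j = 0 then -(3*m : ℝ) else (3*m : ℝ)| ≤ 3*N
        split_ifs
        · rw [abs_neg, abs_of_nonneg h3m0]; linarith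
        · rw [abs_of_nonneg h3m0]; linarith
    have hb2 : layer2.bounded (3*(N:ℝ)) := by
      constructor
      · intro j k l
        show |if k = 0 then (if l = 0 then (1:ℝ) else -1) else 0| ≤ 3*N
        split_ifs <;> norm_num <;> linarith
      · intro i j
        show |if j = 0 then (2:ℝ) else if j = 1 then 1 else if j = 2 then -1 else -2| ≤ 3*N
        split_ifs <;> norm_num <;> linarith
    have hw : ∀ (_ : Fin 1) (j : Fin 4),
        |if j = 0 then (1:ℝ) else if j = 1 then -1 else if j = 2 then -1 else 1| ≤ 3*N := by
      intro i j; split_ifs <;> norm_num <;> linarith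
    exact ⟨Nat.one_pos, show (1:ℕ) ≤ 16 by norm_num, show (4:ℕ) ≤ 16 by norm_num,
      le_refl 2,
      ⟨show (1:ℕ) ≤ 16 by norm_num, show (2:ℕ) ≤ 16 by norm_num,
        show (2:ℕ) ≤ 16 by norm_num, show (4:ℕ) ≤ 16 by norm_num⟩,
      ⟨hb1, hb2⟩, hw, show |(0:ℝ)| ≤ 3*(N:ℝ) by rw [abs_zero]; exact h3N0⟩
  · -- first row only
    intro i j _
    have := i.isLt
    omega
  · -- exact realization
    intro x
    rw [theNet_eval_trap]
    congr 1
    have hNne : (N:ℝ) ≠ 0 := Nat.cast_ne_zero.mpr hN.ne'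
    field_simp
  · -- W^{0,∞} bound
    refine ⟨fun _ => (theNet N m).eval, fun _ => rfl, ?_, ?_⟩
    · intro a ha
      rw [idxList_of_zero (mem_multiIdx_zero ha)]
      exact hasWeakDerivOn_nil _ _
    · unfold sobNormOf
      rw [if_pos rfl]
      refine Finset.sup_le fun a _ => ?_
      rw [eLpNorm_exponent_top]
      refine le_trans (eLpNormEssSup_le_of_ae_bound (C := 1)
        (Filter.Eventually.of_forall fun x => ?_)) (by simp)
      show ‖(theNet N m).eval x‖ ≤ 1
      rw [theNet_eval_trap', Real.norm_eq_abs]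
      exact trap_abs_le _
  · -- W^{1,∞} bound
    refine ⟨fun a => if a 0 = 0 then (theNet N m).eval
        else fun x => (3*N:ℝ) * trapD ((3*N:ℝ) * x 0 - 3*m), ?_, ?_, ?_⟩
    · intro x; simp
    · intro a ha
      rcases mem_multiIdx_one ha with h | h
      · rw [idxList_of_zero h]
        simp only [h, eq_self_iff_true, if_true]
        exact hasWeakDerivOn_nil _ _
      · rw [idxList_of_one h]
        simp only [h, Nat.one_ne_zero, if_false]
        exact theNet_weak N m hN
    · unfold sobNormOf
      rw [if_pos rfl]
      refine Finset.sup_le fun a _ => ?_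
      rw [eLpNorm_exponent_top]
      by_cases h : a 0 = 0
      · simp only [h, eq_self_iff_true, if_true]
        refine le_trans (eLpNormEssSup_le_of_ae_bound (C := 1)
          (Filter.Eventually.of_forall fun x => ?_)) ?_
        · rw [theNet_eval_trap', Real.norm_eq_abs]; exact trap_abs_le _
        · exact ENNReal.ofReal_le_ofReal (by linarith)
      · simp only [if_neg h]
        refine eLpNormEssSup_le_of_ae_bound (C := 3*N)
          (Filter.Eventually.of_forall fun x => ?_)
        rw [Real.norm_eq_abs, abs_mul, abs_of_nonneg h3N0]
        calc 3*(N:ℝ) * |trapD ((3*N:ℝ) * x 0 - 3*m)| ≤ 3*N * 1 :=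
              mul_le_mul_of_nonneg_left (trapD_abs_le _) h3N0
          _ = 3*N := mul_one _
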